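/- Let k₁ < p₁ and k₂ < p₂ be natural numbers, let α⁽¹⁾, α⁽²⁾ : ℕ → ℝ satisfy α⁽¹⁾_{k₁+1} ≠ 0 and α⁽²⁾_{k₂+1} ≠ 0, and let f₁(ξ) = Σ_{m=k₁+1}^{p₁} α⁽¹⁾_m ξ^m and f₂(ξ) = Σ_{m=k₂+1}^{p₂} α⁽²⁾_m ξ^m. Then, as δ → 0⁺, the Rayleigh-type ratio [∫_0^δ∫_0^δ ((f₁′(ξ₁))²(f₂(ξ₂))² + (f₁(ξ₁))²(f₂′(ξ₂))²) dξ₂ dξ₁] / [∫_0^δ∫_0^δ f₁(ξ₁)f₂(ξ₂) dξ₂ dξ₁] is Θ(δ^{k₁+k₂}); in particular this ratio remains bounded as δ → 0⁺ and tends to 0 whenever k₁ + k₂ ≥ 1. -/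

import Mathlib

open Topology Asymptotics Filter

open Topology Asymptotics intervalIntegral Filter

lemma integral_poly {ι : Type*} (S : Finset ι) (c : ι → ℝ) (e : ι → ℕ) (δ : ℝ) :
    ∫ ξ in (0:ℝ)..δ, ∑ i ∈ S, c i * ξ ^ e i
      = ∑ i ∈ S, c i / (e i + 1) * δ ^ (e i + 1) := by
  rw [intervalIntegral.integral_finset_sum]
  · refine Finset.sum_congr rfl fun i _ => ?_
    rw [intervalIntegral.integral_const_mul, integral_pow]
    ring
  · intro i _
    exact (Continuous.intervalIntegrable (by continuity) _ _)

lemma sq_sum_pow {ι : Type*} (S : Finset ι) (c : ι → ℝ) (e : ι → ℕ) (x : ℝ) :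
    (∑ i ∈ S, c i * x ^ e i) ^ 2
      = ∑ q ∈ S ×ˢ S, (c q.1 * c q.2) * x ^ (e q.1 + e q.2) := by
  rw [sq, Finset.sum_mul_sum, ← Finset.sum_product']
  exact Finset.sum_congr rfl fun q _ => by rw [pow_add]; ring
open Topology Asymptotics Filter

lemma tendsto_sum_div_pow {ι : Type*} (S : Finset ι) (c : ι → ℝ) (E : ι → ℕ) (i₀ : ι)
    (hi₀ : i₀ ∈ S) (hle : ∀ i ∈ S, E i₀ ≤ E i) (hinj : ∀ i ∈ S, E i = E i₀ → i = i₀) :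
    Tendsto (fun δ : ℝ => (∑ i ∈ S, c i * δ ^ E i) / δ ^ E i₀) (𝓝[>] 0)
      (𝓝 (c i₀)) := by
  have heq : ∀ᶠ δ : ℝ in 𝓝[>] 0,
      (∑ i ∈ S, c i * δ ^ E i) / δ ^ E i₀ = ∑ i ∈ S, c i * δ ^ (E i - E i₀) := by
    filter_upwards [self_mem_nhdsWithin] with δ (hδ : 0 < δ)
    rw [Finset.sum_div]
    refine Finset.sum_congr rfl fun i hi => ?_
    rw [mul_div_assoc, pow_sub₀ δ (ne_of_gt hδ) (hle i hi), div_eq_mul_inv]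
  rw [Filter.tendsto_congr' heq]
  have hcont : Tendsto (fun δ : ℝ => ∑ i ∈ S, c i * δ ^ (E i - E i₀)) (𝓝[>] 0)
      (𝓝 (∑ i ∈ S, c i * (0:ℝ) ^ (E i - E i₀))) := by
    apply Filter.Tendsto.mono_left _ nhdsWithin_le_nhds
    exact (Continuous.tendsto (by continuity) 0)
  convert hcont using 2
  rw [Finset.sum_eq_single i₀]
  · simp
  · intro i hi hne
    have : E i₀ < E i := lt_of_le_of_ne (hle i hi) (fun h => hne (hinj i hi h.symm))
    rw [zero_pow (by omega), mul_zero]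
  · intro h; exact absurd hi₀ h

lemma isTheta_of_tendsto_div {f g : ℝ → ℝ} {l : Filter ℝ} {c : ℝ} (hc : c ≠ 0)
    (hg : ∀ᶠ x in l, g x ≠ 0) (h : Tendsto (fun x => f x / g x) l (𝓝 c)) :
    f =Θ[l] g := by
  constructor
  · have h1 : (fun x => f x / g x) =O[l] (fun _ => (1:ℝ)) := h.isBigO_one ℝ
    have : f =ᶠ[l] fun x => (f x / g x) * g x := by
      filter_upwards [hg] with x hx
      rw [div_mul_cancel₀ _ hx]
    calc f =ᶠ[l] (fun x => (f x / g x) * g x) := this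
      _ =O[l] (fun x => (1:ℝ) * g x) := h1.mul (isBigO_refl g l)
      _ = g := by funext x; rw [one_mul]
  · have hf : ∀ᶠ x in l, f x ≠ 0 := by
      filter_upwards [h.eventually_ne hc, hg] with x hx hgx
      intro hfx; exact hx (by simp [hfx])
    have h2 : Tendsto (fun x => g x / f x) l (𝓝 c⁻¹) := by
      have := h.inv₀ hc
      simpa [inv_div] using this
    have h1 : (fun x => g x / f x) =O[l] (fun _ => (1:ℝ)) := h2.isBigO_one ℝ
    have : g =ᶠ[l] fun x => (g x / f x) * f x := by
      filter_upwards [hf] with x hx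
      rw [div_mul_cancel₀ _ hx]
    calc g =ᶠ[l] (fun x => (g x / f x) * f x) := this
      _ =O[l] (fun x => (1:ℝ) * f x) := h1.mul (isBigO_refl f l)
      _ = f := by funext x; rw [one_mul]


private lemma deriv_poly_sum (k p : ℕ) (a : ℕ → ℝ) :
    deriv (fun t : ℝ => ∑ m ∈ Finset.Icc (k + 1) p, a m * t ^ m)
      = fun ξ : ℝ => ∑ m ∈ Finset.Icc (k + 1) p, (a m * m) * ξ ^ (m - 1) := by
  funext ξ
  have h : HasDerivAt (fun t : ℝ => ∑ m ∈ Finset.Icc (k + 1) p, a m * t ^ m)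
      (∑ m ∈ Finset.Icc (k + 1) p, (a m * m) * ξ ^ (m - 1)) ξ := by
    refine HasDerivAt.fun_sum fun m hm => ?_
    have := (hasDerivAt_pow m ξ).const_mul (a m)
    convert this using 1
    · rfl
    ring
  exact h.deriv

private lemma tendsto_F (k p : ℕ) (hkp : k < p) (a : ℕ → ℝ) :
    Filter.Tendsto (fun δ : ℝ =>
        (∫ ξ in (0:ℝ)..δ, ∑ m ∈ Finset.Icc (k + 1) p, a m * ξ ^ m) / δ ^ (k + 1 + 1))
      (𝓝[>] 0) (𝓝 (a (k + 1) / ((k + 1 : ℕ) + 1))) := by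
  have hI : ∀ δ : ℝ, (∫ ξ in (0:ℝ)..δ, ∑ m ∈ Finset.Icc (k + 1) p, a m * ξ ^ m)
      = ∑ m ∈ Finset.Icc (k + 1) p, a m / ((m : ℝ) + 1) * δ ^ (m + 1) := fun δ =>
    integral_poly (Finset.Icc (k + 1) p) a (fun m => m) δ
  simp_rw [hI]
  have := tendsto_sum_div_pow (Finset.Icc (k + 1) p)
    (fun m => a m / ((m : ℝ) + 1)) (fun m => m + 1) (k + 1)
    (Finset.mem_Icc.mpr ⟨le_refl _, hkp⟩)
    (fun i hi => by have := Finset.mem_Icc.mp hi; omega)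
    (fun i hi h => by omega)
  exact this

private lemma tendsto_Q (k p : ℕ) (hkp : k < p) (c : ℕ → ℝ) (e : ℕ → ℕ)
    (he : ∀ m, k + 1 ≤ m → e (k + 1) ≤ e m)
    (hestrict : ∀ m, k + 1 < m → e (k + 1) < e m) :
    Filter.Tendsto (fun δ : ℝ =>
        (∫ ξ in (0:ℝ)..δ, (∑ m ∈ Finset.Icc (k + 1) p, c m * ξ ^ e m) ^ 2)
          / δ ^ (e (k + 1) + e (k + 1) + 1))
      (𝓝[>] 0)
      (𝓝 (c (k + 1) * c (k + 1) / ((e (k + 1) + e (k + 1) : ℕ) + 1))) := by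
  have hI : ∀ δ : ℝ, (∫ ξ in (0:ℝ)..δ, (∑ m ∈ Finset.Icc (k + 1) p, c m * ξ ^ e m) ^ 2)
      = ∑ q ∈ (Finset.Icc (k + 1) p) ×ˢ (Finset.Icc (k + 1) p),
          (c q.1 * c q.2) / ((e q.1 + e q.2 : ℕ) + 1) * δ ^ (e q.1 + e q.2 + 1) := by
    intro δ
    simp_rw [sq_sum_pow (Finset.Icc (k + 1) p) c e]
    exact integral_poly _ (fun q : ℕ × ℕ => c q.1 * c q.2) (fun q : ℕ × ℕ => e q.1 + e q.2) δ
  simp_rw [hI]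
  have := tendsto_sum_div_pow ((Finset.Icc (k + 1) p) ×ˢ (Finset.Icc (k + 1) p))
    (fun q : ℕ × ℕ => (c q.1 * c q.2) / ((e q.1 + e q.2 : ℕ) + 1))
    (fun q : ℕ × ℕ => e q.1 + e q.2 + 1) (k + 1, k + 1)
    (Finset.mem_product.mpr ⟨Finset.mem_Icc.mpr ⟨le_refl _, hkp⟩,
      Finset.mem_Icc.mpr ⟨le_refl _, hkp⟩⟩)
    (fun q hq => by
      dsimp only
      obtain ⟨h1, h2⟩ := Finset.mem_product.mp hq
      have h1 := (Finset.mem_Icc.mp h1).1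
      have h2 := (Finset.mem_Icc.mp h2).1
      have := he q.1 h1
      have := he q.2 h2
      omega)
    (fun q hq h => by
      dsimp only at h
      obtain ⟨h1, h2⟩ := Finset.mem_product.mp hq
      have h1 := (Finset.mem_Icc.mp h1).1
      have h2 := (Finset.mem_Icc.mp h2).1
      have e1 := he q.1 h1
      have e2 := he q.2 h2
      have : q.1 = k + 1 := by
        by_contra hne
        have := hestrict q.1 (lt_of_le_of_ne h1 (Ne.symm hne))
        omega
      have : q.2 = k + 1 := by
        by_contra hne
        have := hestrict q.2 (lt_of_le_of_ne h2 (Ne.symm hne))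
        omega
      exact Prod.ext ‹q.1 = k + 1› ‹q.2 = k + 1›)
  exact this

/-- Configuration (c): for `φ(ξ₁,ξ₂) = f₁(ξ₁) f₂(ξ₂)` with
`f_j(ξ) = ∑_{m=k_j+1}^{p_j} α⁽ʲ⁾_m ξ^m`, `α⁽ʲ⁾_{k_j+1} ≠ 0`, the Rayleigh-type
ratio (squared H¹ seminorm over L¹ norm of `φ` on `[0,δ] × [0,δ]`) is
`Θ(δ^{k₁+k₂})` as `δ → 0⁺`; in particular it remains bounded and tends to `0`
whenever `k₁ + k₂ ≥ 1`. -/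
theorem rayleigh_ratio_asymptotics_config_c (k₁ p₁ k₂ p₂ : ℕ)
    (hkp₁ : k₁ < p₁) (hkp₂ : k₂ < p₂)
    (α₁ α₂ : ℕ → ℝ) (hα₁ : α₁ (k₁ + 1) ≠ 0) (hα₂ : α₂ (k₂ + 1) ≠ 0) :
    (fun δ : ℝ =>
        (∫ ξ₁ in (0:ℝ)..δ, ∫ ξ₂ in (0:ℝ)..δ,
          (deriv (fun t : ℝ => ∑ m ∈ Finset.Icc (k₁ + 1) p₁, α₁ m * t ^ m) ξ₁) ^ 2 *
            (∑ m ∈ Finset.Icc (k₂ + 1) p₂, α₂ m * ξ₂ ^ m) ^ 2 +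
          (∑ m ∈ Finset.Icc (k₁ + 1) p₁, α₁ m * ξ₁ ^ m) ^ 2 *
            (deriv (fun t : ℝ => ∑ m ∈ Finset.Icc (k₂ + 1) p₂, α₂ m * t ^ m) ξ₂) ^ 2) /
        (∫ ξ₁ in (0:ℝ)..δ, ∫ ξ₂ in (0:ℝ)..δ,
          (∑ m ∈ Finset.Icc (k₁ + 1) p₁, α₁ m * ξ₁ ^ m) *
          (∑ m ∈ Finset.Icc (k₂ + 1) p₂, α₂ m * ξ₂ ^ m)))
      =Θ[𝓝[>] (0:ℝ)] (fun δ : ℝ => δ ^ (k₁ + k₂)) := by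
  simp only [deriv_poly_sum k₁ p₁ α₁, deriv_poly_sum k₂ p₂ α₂]
  have hcont : ∀ (S : Finset ℕ) (c : ℕ → ℝ) (e : ℕ → ℕ),
      Continuous (fun ξ : ℝ => ∑ m ∈ S, c m * ξ ^ e m) :=
    fun S c e => continuous_finset_sum _ fun i _ => (continuous_const.mul (continuous_pow _))
  -- split the numerator double integral
  have hnum : ∀ δ : ℝ, (∫ ξ₁ in (0:ℝ)..δ, ∫ ξ₂ in (0:ℝ)..δ,
        (∑ m ∈ Finset.Icc (k₁+1) p₁, α₁ m * m * ξ₁ ^ (m-1)) ^ 2 *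
          (∑ m ∈ Finset.Icc (k₂+1) p₂, α₂ m * ξ₂ ^ m) ^ 2 +
        (∑ m ∈ Finset.Icc (k₁+1) p₁, α₁ m * ξ₁ ^ m) ^ 2 *
          (∑ m ∈ Finset.Icc (k₂+1) p₂, α₂ m * m * ξ₂ ^ (m-1)) ^ 2)
      = (∫ ξ in (0:ℝ)..δ, (∑ m ∈ Finset.Icc (k₁+1) p₁, α₁ m * m * ξ ^ (m-1)) ^ 2) *
          (∫ ξ in (0:ℝ)..δ, (∑ m ∈ Finset.Icc (k₂+1) p₂, α₂ m * ξ ^ m) ^ 2) +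
        (∫ ξ in (0:ℝ)..δ, (∑ m ∈ Finset.Icc (k₁+1) p₁, α₁ m * ξ ^ m) ^ 2) *
          (∫ ξ in (0:ℝ)..δ, (∑ m ∈ Finset.Icc (k₂+1) p₂, α₂ m * m * ξ ^ (m-1)) ^ 2) := by
    intro δ
    have hinner : ∀ ξ₁ : ℝ, (∫ ξ₂ in (0:ℝ)..δ,
        (∑ m ∈ Finset.Icc (k₁+1) p₁, α₁ m * m * ξ₁ ^ (m-1)) ^ 2 *
          (∑ m ∈ Finset.Icc (k₂+1) p₂, α₂ m * ξ₂ ^ m) ^ 2 +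
        (∑ m ∈ Finset.Icc (k₁+1) p₁, α₁ m * ξ₁ ^ m) ^ 2 *
          (∑ m ∈ Finset.Icc (k₂+1) p₂, α₂ m * m * ξ₂ ^ (m-1)) ^ 2)
        = (∑ m ∈ Finset.Icc (k₁+1) p₁, α₁ m * m * ξ₁ ^ (m-1)) ^ 2 *
            (∫ ξ in (0:ℝ)..δ, (∑ m ∈ Finset.Icc (k₂+1) p₂, α₂ m * ξ ^ m) ^ 2) +
          (∑ m ∈ Finset.Icc (k₁+1) p₁, α₁ m * ξ₁ ^ m) ^ 2 *
            (∫ ξ in (0:ℝ)..δ, (∑ m ∈ Finset.Icc (k₂+1) p₂, α₂ m * m * ξ ^ (m-1)) ^ 2) := by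
      intro ξ₁
      rw [intervalIntegral.integral_add, intervalIntegral.integral_const_mul,
        intervalIntegral.integral_const_mul]
      · exact (Continuous.intervalIntegrable
          (continuous_const.mul (((hcont _ (fun m => α₂ m) (fun m => m)).pow 2))) _ _)
      · exact (Continuous.intervalIntegrable
          (continuous_const.mul (((hcont _ (fun m => α₂ m * m) (fun m => m - 1)).pow 2))) _ _)
    simp_rw [hinner]
    rw [intervalIntegral.integral_add, intervalIntegral.integral_mul_const,
      intervalIntegral.integral_mul_const]
    · exact (Continuous.intervalIntegrable
        (((hcont _ (fun m => α₁ m * m) (fun m => m - 1)).pow 2).mul continuous_const) _ _)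
    · exact (Continuous.intervalIntegrable
        (((hcont _ (fun m => α₁ m) (fun m => m)).pow 2).mul continuous_const) _ _)
  -- split the denominator double integral
  have hden : ∀ δ : ℝ, (∫ ξ₁ in (0:ℝ)..δ, ∫ ξ₂ in (0:ℝ)..δ,
        (∑ m ∈ Finset.Icc (k₁+1) p₁, α₁ m * ξ₁ ^ m) *
        (∑ m ∈ Finset.Icc (k₂+1) p₂, α₂ m * ξ₂ ^ m))
      = (∫ ξ in (0:ℝ)..δ, ∑ m ∈ Finset.Icc (k₁+1) p₁, α₁ m * ξ ^ m) *
        (∫ ξ in (0:ℝ)..δ, ∑ m ∈ Finset.Icc (k₂+1) p₂, α₂ m * ξ ^ m) := by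
    intro δ
    have hinner : ∀ ξ₁ : ℝ, (∫ ξ₂ in (0:ℝ)..δ,
        (∑ m ∈ Finset.Icc (k₁+1) p₁, α₁ m * ξ₁ ^ m) *
        (∑ m ∈ Finset.Icc (k₂+1) p₂, α₂ m * ξ₂ ^ m))
        = (∑ m ∈ Finset.Icc (k₁+1) p₁, α₁ m * ξ₁ ^ m) *
          (∫ ξ in (0:ℝ)..δ, ∑ m ∈ Finset.Icc (k₂+1) p₂, α₂ m * ξ ^ m) := fun ξ₁ =>
      intervalIntegral.integral_const_mul _ _
    simp_rw [hinner]
    exact intervalIntegral.integral_mul_const _ _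
  simp only [hnum, hden]
  -- tendsto facts
  have tF₁ := tendsto_F k₁ p₁ hkp₁ α₁
  have tF₂ := tendsto_F k₂ p₂ hkp₂ α₂
  have tG₁ := tendsto_Q k₁ p₁ hkp₁ α₁ (fun m => m) (fun m hm => hm) (fun m hm => hm)
  have tG₂ := tendsto_Q k₂ p₂ hkp₂ α₂ (fun m => m) (fun m hm => hm) (fun m hm => hm)
  have tH₁ := tendsto_Q k₁ p₁ hkp₁ (fun m => α₁ m * m) (fun m => m - 1)
    (fun m hm => by show k₁ + 1 - 1 ≤ m - 1; omega)
    (fun m hm => by show k₁ + 1 - 1 < m - 1; omega)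
  have tH₂ := tendsto_Q k₂ p₂ hkp₂ (fun m => α₂ m * m) (fun m => m - 1)
    (fun m hm => by show k₂ + 1 - 1 ≤ m - 1; omega)
    (fun m hm => by show k₂ + 1 - 1 < m - 1; omega)
  -- combined numerator
  have tnum := (tH₁.mul tG₂).add (tG₁.mul tH₂)
  have tden := tF₁.mul tF₂
  rw [show (fun δ : ℝ =>
      (∫ ξ in (0:ℝ)..δ, (∑ m ∈ Finset.Icc (k₁+1) p₁, α₁ m * m * ξ ^ (m-1)) ^ 2)
        / δ ^ (k₁ + 1 - 1 + (k₁ + 1 - 1) + 1) *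
      ((∫ ξ in (0:ℝ)..δ, (∑ m ∈ Finset.Icc (k₂+1) p₂, α₂ m * ξ ^ m) ^ 2)
        / δ ^ (k₂ + 1 + (k₂ + 1) + 1)) +
      (∫ ξ in (0:ℝ)..δ, (∑ m ∈ Finset.Icc (k₁+1) p₁, α₁ m * ξ ^ m) ^ 2)
        / δ ^ (k₁ + 1 + (k₁ + 1) + 1) *
      ((∫ ξ in (0:ℝ)..δ, (∑ m ∈ Finset.Icc (k₂+1) p₂, α₂ m * m * ξ ^ (m-1)) ^ 2)
        / δ ^ (k₂ + 1 - 1 + (k₂ + 1 - 1) + 1)))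
    = fun δ : ℝ =>
      ((∫ ξ in (0:ℝ)..δ, (∑ m ∈ Finset.Icc (k₁+1) p₁, α₁ m * m * ξ ^ (m-1)) ^ 2) *
        (∫ ξ in (0:ℝ)..δ, (∑ m ∈ Finset.Icc (k₂+1) p₂, α₂ m * ξ ^ m) ^ 2) +
       (∫ ξ in (0:ℝ)..δ, (∑ m ∈ Finset.Icc (k₁+1) p₁, α₁ m * ξ ^ m) ^ 2) *
        (∫ ξ in (0:ℝ)..δ, (∑ m ∈ Finset.Icc (k₂+1) p₂, α₂ m * m * ξ ^ (m-1)) ^ 2))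
      / δ ^ ((k₁ + 1 - 1 + (k₁ + 1 - 1) + 1) + (k₂ + 1 + (k₂ + 1) + 1)) from by
    funext δ
    rw [div_mul_div_comm, div_mul_div_comm, ← pow_add, ← pow_add,
      show k₁ + 1 + (k₁ + 1) + 1 + (k₂ + 1 - 1 + (k₂ + 1 - 1) + 1)
        = k₁ + 1 - 1 + (k₁ + 1 - 1) + 1 + (k₂ + 1 + (k₂ + 1) + 1) from by omega,
      ← add_div]] at tnum
  rw [show (fun δ : ℝ =>
      (∫ ξ in (0:ℝ)..δ, ∑ m ∈ Finset.Icc (k₁+1) p₁, α₁ m * ξ ^ m) / δ ^ (k₁ + 1 + 1) *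
      ((∫ ξ in (0:ℝ)..δ, ∑ m ∈ Finset.Icc (k₂+1) p₂, α₂ m * ξ ^ m) / δ ^ (k₂ + 1 + 1)))
    = fun δ : ℝ =>
      ((∫ ξ in (0:ℝ)..δ, ∑ m ∈ Finset.Icc (k₁+1) p₁, α₁ m * ξ ^ m) *
       (∫ ξ in (0:ℝ)..δ, ∑ m ∈ Finset.Icc (k₂+1) p₂, α₂ m * ξ ^ m))
      / δ ^ ((k₁ + 1 + 1) + (k₂ + 1 + 1)) from by
    funext δ
    rw [div_mul_div_comm, ← pow_add]] at tden
  -- limit values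
  have hLH₁ : (0:ℝ) < α₁ (k₁+1) * (k₁+1 : ℕ) * (α₁ (k₁+1) * (k₁+1 : ℕ))
      / ((k₁ + 1 - 1 + (k₁ + 1 - 1) : ℕ) + 1) := by
    apply div_pos (mul_self_pos.mpr (mul_ne_zero hα₁ (Nat.cast_ne_zero.mpr (by omega))))
    positivity
  have hLH₂ : (0:ℝ) < α₂ (k₂+1) * (k₂+1 : ℕ) * (α₂ (k₂+1) * (k₂+1 : ℕ))
      / ((k₂ + 1 - 1 + (k₂ + 1 - 1) : ℕ) + 1) := by
    apply div_pos (mul_self_pos.mpr (mul_ne_zero hα₂ (Nat.cast_ne_zero.mpr (by omega))))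
    positivity
  have hLG₁ : (0:ℝ) < α₁ (k₁+1) * α₁ (k₁+1) / ((k₁ + 1 + (k₁ + 1) : ℕ) + 1) := by
    apply div_pos (mul_self_pos.mpr hα₁); positivity
  have hLG₂ : (0:ℝ) < α₂ (k₂+1) * α₂ (k₂+1) / ((k₂ + 1 + (k₂ + 1) : ℕ) + 1) := by
    apply div_pos (mul_self_pos.mpr hα₂); positivity
  have hLF₁ : α₁ (k₁+1) / ((k₁ + 1 : ℕ) + 1) ≠ 0 := div_ne_zero hα₁ (by positivity)
  have hLF₂ : α₂ (k₂+1) / ((k₂ + 1 : ℕ) + 1) ≠ 0 := div_ne_zero hα₂ (by positivity)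
  have hLden : α₁ (k₁+1) / ((k₁ + 1 : ℕ) + 1) * (α₂ (k₂+1) / ((k₂ + 1 : ℕ) + 1)) ≠ 0 :=
    mul_ne_zero hLF₁ hLF₂
  have tratio := tnum.div tden hLden
  refine isTheta_of_tendsto_div (c := _) (div_ne_zero
    (ne_of_gt (add_pos (mul_pos hLH₁ hLG₂) (mul_pos hLG₁ hLH₂))) hLden) ?_ ?_
  · filter_upwards [self_mem_nhdsWithin] with δ (hδ : (0:ℝ) < δ)
    exact pow_ne_zero _ (ne_of_gt hδ)
  · refine (Filter.tendsto_congr' ?_).mpr tratio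
    filter_upwards [self_mem_nhdsWithin] with δ (hδ : (0:ℝ) < δ)
    simp only [Pi.div_apply]
    rw [div_div_div_comm,
      show (k₁ + 1 - 1 + (k₁ + 1 - 1) + 1) + (k₂ + 1 + (k₂ + 1) + 1)
        = (k₁ + k₂) + ((k₁ + 1 + 1) + (k₂ + 1 + 1)) from by omega,
      pow_add δ (k₁ + k₂) ((k₁ + 1 + 1) + (k₂ + 1 + 1)),
      mul_div_cancel_right₀ _ (pow_ne_zero _ (ne_of_gt hδ))]
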